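/- arXiv:2009.02354 — 3 statements merged into one kernel-verified Lean document; each statement's English description precedes it below -/
import Mathlib

section
/- If a Hermitian operator H on a bipartite Hilbert space H_L ⊗ H_R has an almost-Schmidt decomposition H = H_L ⊗ 1_R + 1_L ⊗ H_R + Σ_{a=1}^{N} Σ_{i=1}^{D_a} s_a · O_L^{a,i} ⊗ O_R^{a,i}, where the full collections {O_L^{a,i}} and {O_R^{a,i}} are each orthonormal with respect to the normalized Frobenius inner product ⟨A,B⟩ = Tr(A†B)/Tr(1), the s_a > 0 are distinct, H_L ⊗ 1_R and 1_L ⊗ H_R are Hermitian, and all O_L^{a,i}, O_R^{a,i} are traceless, then for any subset 𝒜 ⊆ {1,…,N} the truncated operator H' = H_L ⊗ 1_R + 1_L ⊗ H_R + Σ_{a∈𝒜} Σ_i s_a · O_L^{a,i} ⊗ O_R^{a,i} is Hermitian. -/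
open Matrix
open scoped Kronecker

set_option linter.unusedSectionVars false

noncomputable def nFrobInner {n : Type*} [Fintype n] [DecidableEq n]
    (A B : Matrix n n ℂ) : ℂ :=
  (Aᴴ * B).trace / (Fintype.card n : ℂ)

section aux
variable {n : Type*} [Fintype n] [DecidableEq n]

lemma nFrob_eq (A B : Matrix n n ℂ) :
    nFrobInner A B = (∑ i, ∑ j, (starRingEnd ℂ) (A i j) * B i j) / (Fintype.card n : ℂ) := by
  unfold nFrobInner
  congr 1
  rw [Matrix.trace]
  simp only [Matrix.diag, Matrix.mul_apply, Matrix.conjTranspose_apply, starRingEnd_apply]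
  rw [Finset.sum_comm]

lemma nFrob_smul_right (A B : Matrix n n ℂ) (c : ℂ) :
    nFrobInner A (c • B) = c * nFrobInner A B := by
  unfold nFrobInner
  rw [Matrix.mul_smul, Matrix.trace_smul, smul_eq_mul, mul_div_assoc]

lemma nFrob_smul_left (A B : Matrix n n ℂ) (c : ℂ) :
    nFrobInner (c • A) B = (starRingEnd ℂ) c * nFrobInner A B := by
  unfold nFrobInner
  rw [Matrix.conjTranspose_smul, Matrix.smul_mul, Matrix.trace_smul, smul_eq_mul,
    mul_div_assoc, starRingEnd_apply]

lemma nFrob_sum_right {ι : Type*} (t : Finset ι) (A : Matrix n n ℂ) (f : ι → Matrix n n ℂ) :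
    nFrobInner A (∑ i ∈ t, f i) = ∑ i ∈ t, nFrobInner A (f i) := by
  unfold nFrobInner
  rw [Matrix.mul_sum, Matrix.trace_sum, Finset.sum_div]

lemma nFrob_sum_left {ι : Type*} (t : Finset ι) (A : Matrix n n ℂ) (f : ι → Matrix n n ℂ) :
    nFrobInner (∑ i ∈ t, f i) A = ∑ i ∈ t, nFrobInner (f i) A := by
  unfold nFrobInner
  rw [Matrix.conjTranspose_sum, Matrix.sum_mul, Matrix.trace_sum, Finset.sum_div]

lemma nFrob_conj_symm (A B : Matrix n n ℂ) :
    nFrobInner A B = (starRingEnd ℂ) (nFrobInner B A) := by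
  unfold nFrobInner
  rw [map_div₀]
  congr 1
  · rw [starRingEnd_apply, ← Matrix.trace_conjTranspose, Matrix.conjTranspose_mul,
      Matrix.conjTranspose_conjTranspose]
  · simp

lemma nFrob_conjTranspose (A B : Matrix n n ℂ) :
    nFrobInner Aᴴ Bᴴ = (starRingEnd ℂ) (nFrobInner A B) := by
  unfold nFrobInner
  rw [map_div₀]
  congr 1
  · rw [starRingEnd_apply, ← Matrix.trace_conjTranspose, Matrix.conjTranspose_mul,
      Matrix.conjTranspose_conjTranspose, Matrix.trace_mul_comm]
  · simp

end aux

section ctr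
variable {L R : Type*} [Fintype L] [DecidableEq L] [Fintype R] [DecidableEq R]

noncomputable def ctrL (X : Matrix L L ℂ) (M : Matrix (L × R) (L × R) ℂ) : Matrix R R ℂ :=
  Matrix.of fun r r' =>
    (∑ l, ∑ l', (starRingEnd ℂ) (X l l') * M (l, r) (l', r')) / (Fintype.card L : ℂ)

noncomputable def ctrR (Y : Matrix R R ℂ) (M : Matrix (L × R) (L × R) ℂ) : Matrix L L ℂ :=
  Matrix.of fun l l' =>
    (∑ r, ∑ r', (starRingEnd ℂ) (Y r r') * M (l, r) (l', r')) / (Fintype.card R : ℂ)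

lemma ctrL_kron (X A : Matrix L L ℂ) (B : Matrix R R ℂ) :
    ctrL X (A ⊗ₖ B) = nFrobInner X A • B := by
  ext r r'
  simp only [ctrL, Matrix.of_apply, Matrix.kroneckerMap_apply, Matrix.smul_apply, smul_eq_mul,
    nFrob_eq]
  rw [div_mul_eq_mul_div]
  congr 1
  simp [Finset.sum_mul, mul_assoc]

lemma ctrL_smul (X : Matrix L L ℂ) (c : ℂ) (M : Matrix (L × R) (L × R) ℂ) :
    ctrL X (c • M) = c • ctrL X M := by
  ext r r'
  simp only [ctrL, Matrix.of_apply, Matrix.smul_apply, smul_eq_mul]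
  rw [← mul_div_assoc]
  congr 1
  simp [Finset.mul_sum, mul_left_comm]

lemma ctrL_zero (X : Matrix L L ℂ) : ctrL X (0 : Matrix (L × R) (L × R) ℂ) = 0 := by
  ext r r'
  simp [ctrL]

lemma ctrL_add (X : Matrix L L ℂ) (M N : Matrix (L × R) (L × R) ℂ) :
    ctrL X (M + N) = ctrL X M + ctrL X N := by
  ext r r'
  simp [ctrL, mul_add, Finset.sum_add_distrib, add_div]

lemma ctrL_sum {ι : Type*} (t : Finset ι) (X : Matrix L L ℂ)
    (f : ι → Matrix (L × R) (L × R) ℂ) :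
    ctrL X (∑ i ∈ t, f i) = ∑ i ∈ t, ctrL X (f i) := by
  classical
  induction t using Finset.induction_on with
  | empty => simp [ctrL_zero]
  | insert x t' h ih => rw [Finset.sum_insert h, Finset.sum_insert h, ctrL_add, ih]

lemma ctrR_kron (Y : Matrix R R ℂ) (A : Matrix L L ℂ) (B : Matrix R R ℂ) :
    ctrR Y (A ⊗ₖ B) = nFrobInner Y B • A := by
  ext l l'
  simp only [ctrR, Matrix.of_apply, Matrix.kroneckerMap_apply, Matrix.smul_apply, smul_eq_mul,
    nFrob_eq]
  rw [div_mul_eq_mul_div]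
  congr 1
  simp [Finset.sum_mul, Finset.mul_sum, mul_comm, mul_left_comm, mul_assoc]

lemma ctrR_smul (Y : Matrix R R ℂ) (c : ℂ) (M : Matrix (L × R) (L × R) ℂ) :
    ctrR Y (c • M) = c • ctrR Y M := by
  ext l l'
  simp only [ctrR, Matrix.of_apply, Matrix.smul_apply, smul_eq_mul]
  rw [← mul_div_assoc]
  congr 1
  simp [Finset.mul_sum, mul_left_comm]

lemma ctrR_zero (Y : Matrix R R ℂ) : ctrR Y (0 : Matrix (L × R) (L × R) ℂ) = 0 := by
  ext l l'
  simp [ctrR]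

lemma ctrR_add (Y : Matrix R R ℂ) (M N : Matrix (L × R) (L × R) ℂ) :
    ctrR Y (M + N) = ctrR Y M + ctrR Y N := by
  ext l l'
  simp [ctrR, mul_add, Finset.sum_add_distrib, add_div]

lemma ctrR_sum {ι : Type*} (t : Finset ι) (Y : Matrix R R ℂ)
    (f : ι → Matrix (L × R) (L × R) ℂ) :
    ctrR Y (∑ i ∈ t, f i) = ∑ i ∈ t, ctrR Y (f i) := by
  classical
  induction t using Finset.induction_on with
  | empty => simp [ctrR_zero]
  | insert x t' h ih => rw [Finset.sum_insert h, Finset.sum_insert h, ctrR_add, ih]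

lemma kron_sum_right {ι : Type*} (t : Finset ι) (A : Matrix L L ℂ) (f : ι → Matrix R R ℂ) :
    A ⊗ₖ (∑ i ∈ t, f i) = ∑ i ∈ t, A ⊗ₖ f i := by
  ext ⟨l, r⟩ ⟨l', r'⟩
  simp [Matrix.kroneckerMap_apply, Matrix.sum_apply, Finset.mul_sum]

lemma kron_sum_left {ι : Type*} (t : Finset ι) (f : ι → Matrix L L ℂ) (B : Matrix R R ℂ) :
    (∑ i ∈ t, f i) ⊗ₖ B = ∑ i ∈ t, f i ⊗ₖ B := by
  ext ⟨l, r⟩ ⟨l', r'⟩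
  simp [Matrix.kroneckerMap_apply, Matrix.sum_apply, Finset.sum_mul]

lemma kron_conjTranspose (A : Matrix L L ℂ) (B : Matrix R R ℂ) :
    (A ⊗ₖ B)ᴴ = Aᴴ ⊗ₖ Bᴴ := by
  ext ⟨l, r⟩ ⟨l', r'⟩
  simp [Matrix.conjTranspose_apply, Matrix.kroneckerMap_apply]

end ctr
/-- Truncating an almost-Schmidt decomposition of a Hermitian operator by keeping any
subset of the (distinct, positive) singular values yields a Hermitian operator. -/
theorem stmt0 {L R : Type*} [Fintype L] [DecidableEq L] [Fintype R] [DecidableEq R]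
    (N : ℕ) (Deg : Fin N → ℕ) (s : Fin N → ℝ)
    (HL : Matrix L L ℂ) (HR : Matrix R R ℂ)
    (OL : (a : Fin N) → Fin (Deg a) → Matrix L L ℂ)
    (OR' : (a : Fin N) → Fin (Deg a) → Matrix R R ℂ)
    (H : Matrix (L × R) (L × R) ℂ)
    (hH : H = HL ⊗ₖ (1 : Matrix R R ℂ) + (1 : Matrix L L ℂ) ⊗ₖ HR +
        ∑ a : Fin N, ∑ i : Fin (Deg a), (s a : ℂ) • (OL a i ⊗ₖ OR' a i))
    (hHerm : H.IsHermitian)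
    (hHLHerm : (HL ⊗ₖ (1 : Matrix R R ℂ)).IsHermitian)
    (hHRHerm : ((1 : Matrix L L ℂ) ⊗ₖ HR).IsHermitian)
    (hLorth : ∀ p q : Σ a : Fin N, Fin (Deg a),
      nFrobInner (OL p.1 p.2) (OL q.1 q.2) = if p = q then 1 else 0)
    (hRorth : ∀ p q : Σ a : Fin N, Fin (Deg a),
      nFrobInner (OR' p.1 p.2) (OR' q.1 q.2) = if p = q then 1 else 0)
    (hspos : ∀ a, 0 < s a) (hsinj : Function.Injective s)
    (hLtr : ∀ a i, (OL a i).trace = 0) (hRtr : ∀ a i, (OR' a i).trace = 0)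
    (𝒜 : Finset (Fin N)) :
    (HL ⊗ₖ (1 : Matrix R R ℂ) + (1 : Matrix L L ℂ) ⊗ₖ HR +
      ∑ a ∈ 𝒜, ∑ i : Fin (Deg a), (s a : ℂ) • (OL a i ⊗ₖ OR' a i)).IsHermitian := by
  classical
  -- the interaction part, as a sum over the sigma type
  set S : Matrix (L × R) (L × R) ℂ :=
    ∑ p : Σ a : Fin N, Fin (Deg a), (s p.1 : ℂ) • (OL p.1 p.2 ⊗ₖ OR' p.1 p.2) with hSdef
  have hsigS : ∑ a : Fin N, ∑ i : Fin (Deg a), (s a : ℂ) • (OL a i ⊗ₖ OR' a i) = S := by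
    rw [hSdef, ← Finset.univ_sigma_univ, Finset.sum_sigma]
  -- S is Hermitian
  have hS : Sᴴ = S := by
    have h1 : S = H - HL ⊗ₖ (1 : Matrix R R ℂ) - (1 : Matrix L L ℂ) ⊗ₖ HR := by
      rw [hH, ← hsigS]; abel
    rw [h1, Matrix.conjTranspose_sub, Matrix.conjTranspose_sub, hHerm, hHLHerm, hHRHerm]
  -- expansion of Sᴴ
  have hSH : Sᴴ = ∑ p : Σ a : Fin N, Fin (Deg a),
      (s p.1 : ℂ) • ((OL p.1 p.2)ᴴ ⊗ₖ (OR' p.1 p.2)ᴴ) := by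
    rw [hSdef, Matrix.conjTranspose_sum]
    refine Finset.sum_congr rfl fun p _ => ?_
    rw [Matrix.conjTranspose_smul, kron_conjTranspose]
    simp [Complex.star_def, Complex.conj_ofReal]
  -- orthonormality of the adjoint families
  have hLorth' : ∀ p q : Σ a : Fin N, Fin (Deg a),
      nFrobInner (OL p.1 p.2)ᴴ (OL q.1 q.2)ᴴ = if p = q then 1 else 0 := by
    intro p q; rw [nFrob_conjTranspose, hLorth]
    split <;> simp
  have hRorth' : ∀ p q : Σ a : Fin N, Fin (Deg a),
      nFrobInner (OR' p.1 p.2)ᴴ (OR' q.1 q.2)ᴴ = if p = q then 1 else 0 := by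
    intro p q; rw [nFrob_conjTranspose, hRorth]
    split <;> simp
  -- contraction formulas
  have hctrLS : ∀ X : Matrix L L ℂ, ctrL X S = ∑ p : Σ a : Fin N, Fin (Deg a),
      ((s p.1 : ℂ) * nFrobInner X (OL p.1 p.2)) • OR' p.1 p.2 := by
    intro X
    rw [hSdef, ctrL_sum]
    refine Finset.sum_congr rfl fun p _ => ?_
    rw [ctrL_smul, ctrL_kron, smul_smul]
  have hctrLSH : ∀ X : Matrix L L ℂ, ctrL X Sᴴ = ∑ p : Σ a : Fin N, Fin (Deg a),
      ((s p.1 : ℂ) * nFrobInner X (OL p.1 p.2)ᴴ) • (OR' p.1 p.2)ᴴ := by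
    intro X
    rw [hSH, ctrL_sum]
    refine Finset.sum_congr rfl fun p _ => ?_
    rw [ctrL_smul, ctrL_kron, smul_smul]
  have hctrRS : ∀ Y : Matrix R R ℂ, ctrR Y S = ∑ p : Σ a : Fin N, Fin (Deg a),
      ((s p.1 : ℂ) * nFrobInner Y (OR' p.1 p.2)) • OL p.1 p.2 := by
    intro Y
    rw [hSdef, ctrR_sum]
    refine Finset.sum_congr rfl fun p _ => ?_
    rw [ctrR_smul, ctrR_kron, smul_smul]
  have hctrRSH : ∀ Y : Matrix R R ℂ, ctrR Y Sᴴ = ∑ p : Σ a : Fin N, Fin (Deg a),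
      ((s p.1 : ℂ) * nFrobInner Y (OR' p.1 p.2)ᴴ) • (OL p.1 p.2)ᴴ := by
    intro Y
    rw [hSH, ctrR_sum]
    refine Finset.sum_congr rfl fun p _ => ?_
    rw [ctrR_smul, ctrR_kron, smul_smul]
  -- the positive superoperator P, computed two ways
  have hP1 : ∀ X : Matrix L L ℂ, ctrR (ctrL X S) S = ∑ p : Σ a : Fin N, Fin (Deg a),
      ((s p.1 : ℂ) ^ 2 * nFrobInner (OL p.1 p.2) X) • OL p.1 p.2 := by
    intro X
    rw [hctrRS]
    refine Finset.sum_congr rfl fun p _ => ?_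
    congr 1
    rw [hctrLS, nFrob_sum_left]
    simp only [nFrob_smul_left, hRorth, _root_.map_mul, mul_ite, mul_one, mul_zero, ite_mul, zero_mul]
    rw [Finset.sum_ite_eq' Finset.univ p]
    simp only [Finset.mem_univ, if_true, Complex.conj_ofReal]
    rw [← nFrob_conj_symm]
    ring
  have hP2 : ∀ X : Matrix L L ℂ, ctrR (ctrL X S) S = ∑ p : Σ a : Fin N, Fin (Deg a),
      ((s p.1 : ℂ) ^ 2 * nFrobInner (OL p.1 p.2)ᴴ X) • (OL p.1 p.2)ᴴ := by
    intro X
    conv_lhs => rw [← hS]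
    rw [hctrRSH]
    refine Finset.sum_congr rfl fun p _ => ?_
    congr 1
    rw [hctrLSH, nFrob_sum_left]
    simp only [nFrob_smul_left, hRorth', _root_.map_mul, mul_ite, mul_one, mul_zero, ite_mul, zero_mul]
    rw [Finset.sum_ite_eq' Finset.univ p]
    simp only [Finset.mem_univ, if_true, Complex.conj_ofReal]
    rw [← nFrob_conj_symm]
    ring
  -- P acts diagonally on combinations of the OL's, resp. of the OLᴴ's
  have hstep1 : ∀ (c : (Σ a : Fin N, Fin (Deg a)) → ℂ) (X : Matrix L L ℂ),
      ctrR (ctrL (∑ q : Σ a : Fin N, Fin (Deg a),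
          (c q * nFrobInner (OL q.1 q.2) X) • OL q.1 q.2) S) S
        = ∑ q : Σ a : Fin N, Fin (Deg a),
          ((s q.1 : ℂ) ^ 2 * c q * nFrobInner (OL q.1 q.2) X) • OL q.1 q.2 := by
    intro c X
    rw [hP1]
    refine Finset.sum_congr rfl fun p _ => ?_
    congr 1
    rw [nFrob_sum_right]
    simp only [nFrob_smul_right, hLorth, mul_ite, mul_one, mul_zero, ite_mul, zero_mul]
    rw [Finset.sum_ite_eq Finset.univ p]
    simp only [Finset.mem_univ, if_true]
    ring
  have hstep2 : ∀ (c : (Σ a : Fin N, Fin (Deg a)) → ℂ) (X : Matrix L L ℂ),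
      ctrR (ctrL (∑ q : Σ a : Fin N, Fin (Deg a),
          (c q * nFrobInner (OL q.1 q.2)ᴴ X) • (OL q.1 q.2)ᴴ) S) S
        = ∑ q : Σ a : Fin N, Fin (Deg a),
          ((s q.1 : ℂ) ^ 2 * c q * nFrobInner (OL q.1 q.2)ᴴ X) • (OL q.1 q.2)ᴴ := by
    intro c X
    rw [hP2]
    refine Finset.sum_congr rfl fun p _ => ?_
    congr 1
    rw [nFrob_sum_right]
    simp only [nFrob_smul_right, hLorth', mul_ite, mul_one, mul_zero, ite_mul, zero_mul]
    rw [Finset.sum_ite_eq Finset.univ p]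
    simp only [Finset.mem_univ, if_true]
    ring
  -- transfer identity for all powers
  have hpow : ∀ (k : ℕ) (X : Matrix L L ℂ),
      ∑ q : Σ a : Fin N, Fin (Deg a),
          (((s q.1 : ℂ) ^ 2) ^ (k + 1) * nFrobInner (OL q.1 q.2) X) • OL q.1 q.2
        = ∑ q : Σ a : Fin N, Fin (Deg a),
          (((s q.1 : ℂ) ^ 2) ^ (k + 1) * nFrobInner (OL q.1 q.2)ᴴ X) • (OL q.1 q.2)ᴴ := by
    intro k
    induction k with
    | zero =>
      intro X
      have := (hP1 X).symm.trans (hP2 X)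
      simpa [pow_one] using this
    | succ k ih =>
      intro X
      have e1 : ∑ q : Σ a : Fin N, Fin (Deg a),
          (((s q.1 : ℂ) ^ 2) ^ (k + 1 + 1) * nFrobInner (OL q.1 q.2) X) • OL q.1 q.2
          = ctrR (ctrL (∑ q : Σ a : Fin N, Fin (Deg a),
              (((s q.1 : ℂ) ^ 2) ^ (k + 1) * nFrobInner (OL q.1 q.2) X) • OL q.1 q.2) S) S := by
        rw [hstep1]
        refine Finset.sum_congr rfl fun q _ => ?_
        congr 2
        rw [pow_succ]
        ring
      have e2 : ∑ q : Σ a : Fin N, Fin (Deg a),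
          (((s q.1 : ℂ) ^ 2) ^ (k + 1 + 1) * nFrobInner (OL q.1 q.2)ᴴ X) • (OL q.1 q.2)ᴴ
          = ctrR (ctrL (∑ q : Σ a : Fin N, Fin (Deg a),
              (((s q.1 : ℂ) ^ 2) ^ (k + 1) * nFrobInner (OL q.1 q.2)ᴴ X) • (OL q.1 q.2)ᴴ) S) S := by
        rw [hstep2]
        refine Finset.sum_congr rfl fun q _ => ?_
        congr 2
        rw [pow_succ]
        ring
      rw [e1, e2, ih X]
  -- interpolation polynomial hitting the indicator of 𝒜 at the s_a², and 0 at 0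
  set v : Option (Fin N) → ℂ := fun o => o.elim 0 (fun a => (s a : ℂ) ^ 2) with hvdef
  set r : Option (Fin N) → ℂ := fun o => o.elim 0 (fun a => if a ∈ 𝒜 then 1 else 0) with hrdef
  have hvinj : Set.InjOn v (Finset.univ : Finset (Option (Fin N))) := by
    have hne : ∀ a : Fin N, (s a : ℂ) ^ 2 ≠ 0 := fun a =>
      pow_ne_zero _ (Complex.ofReal_ne_zero.mpr (hspos a).ne')
    have hsq : ∀ a b : Fin N, (s a : ℂ) ^ 2 = (s b : ℂ) ^ 2 → a = b := by
      intro a b hab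
      have h2 : (s a) ^ 2 = (s b) ^ 2 := by exact_mod_cast hab
      have : s a = s b := by nlinarith [hspos a, hspos b, sq_nonneg (s a - s b)]
      exact hsinj this
    intro x _ y _ hxy
    match x, y with
    | none, none => rfl
    | some a, some b => exact congrArg some (hsq a b hxy)
    | none, some b => exact absurd hxy.symm (hne b)
    | some a, none => exact absurd hxy (hne a)
  set f : Polynomial ℂ := Lagrange.interpolate Finset.univ v r with hfdef
  have hnode : ∀ i : Option (Fin N), Polynomial.eval (v i) f = r i := fun i =>
    Lagrange.eval_interpolate_at_node r hvinj (Finset.mem_univ i)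
  have hcoeff0 : f.coeff 0 = 0 := by
    rw [Polynomial.coeff_zero_eq_eval_zero]
    have h0 := hnode none
    simpa [hvdef, hrdef] using h0
  have hind : ∀ a : Fin N, (if a ∈ 𝒜 then (1 : ℂ) else 0)
      = ∑ k ∈ Finset.range f.natDegree, f.coeff (k + 1) * ((s a : ℂ) ^ 2) ^ (k + 1) := by
    intro a
    have h1 := hnode (some a)
    rw [Polynomial.eval_eq_sum_range, Finset.sum_range_succ'] at h1
    simp only [hvdef, hrdef, Option.elim, hcoeff0, zero_mul, add_zero] at h1
    rw [← h1]
  -- the key projected identity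
  have key : ∀ X : Matrix L L ℂ,
      ∑ q : Σ a : Fin N, Fin (Deg a),
          ((if q.1 ∈ 𝒜 then (1 : ℂ) else 0) * nFrobInner (OL q.1 q.2) X) • OL q.1 q.2
        = ∑ q : Σ a : Fin N, Fin (Deg a),
          ((if q.1 ∈ 𝒜 then (1 : ℂ) else 0) * nFrobInner (OL q.1 q.2)ᴴ X) • (OL q.1 q.2)ᴴ := by
    have expand : ∀ (g : (Σ a : Fin N, Fin (Deg a)) → ℂ)
        (M : (Σ a : Fin N, Fin (Deg a)) → Matrix L L ℂ),
        ∑ q : Σ a : Fin N, Fin (Deg a), ((if q.1 ∈ 𝒜 then (1 : ℂ) else 0) * g q) • M q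
          = ∑ k ∈ Finset.range f.natDegree, f.coeff (k + 1) •
              ∑ q : Σ a : Fin N, Fin (Deg a), (((s q.1 : ℂ) ^ 2) ^ (k + 1) * g q) • M q := by
      intro g M
      have : ∀ q : Σ a : Fin N, Fin (Deg a),
          ((if q.1 ∈ 𝒜 then (1 : ℂ) else 0) * g q) • M q
            = ∑ k ∈ Finset.range f.natDegree,
                (f.coeff (k + 1) * (((s q.1 : ℂ) ^ 2) ^ (k + 1) * g q)) • M q := by
        intro q
        rw [hind q.1, Finset.sum_mul, Finset.sum_smul]
        exact Finset.sum_congr rfl fun k _ => by rw [mul_assoc]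
      have h2 := Finset.sum_congr rfl fun q (_ : q ∈ (Finset.univ : Finset (Σ a : Fin N, Fin (Deg a)))) => this q
      rw [h2, Finset.sum_comm]
      refine Finset.sum_congr rfl fun k _ => ?_
      rw [Finset.smul_sum]
      exact Finset.sum_congr rfl fun q _ => (smul_smul _ _ _).symm
    intro X
    rw [expand, expand]
    exact Finset.sum_congr rfl fun k _ => by rw [hpow k X]
  -- the truncated interaction part
  set T : Matrix (L × R) (L × R) ℂ :=
    ∑ q : Σ a : Fin N, Fin (Deg a),
      ((if q.1 ∈ 𝒜 then (1 : ℂ) else 0) * (s q.1 : ℂ)) • (OL q.1 q.2 ⊗ₖ OR' q.1 q.2) with hTdef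
  have hT' : ∑ a ∈ 𝒜, ∑ i : Fin (Deg a), (s a : ℂ) • (OL a i ⊗ₖ OR' a i) = T := by
    have h1 : ∀ a : Fin N,
        (if a ∈ 𝒜 then ∑ i : Fin (Deg a), (s a : ℂ) • (OL a i ⊗ₖ OR' a i) else 0)
          = ∑ i : Fin (Deg a),
              ((if a ∈ 𝒜 then (1 : ℂ) else 0) * (s a : ℂ)) • (OL a i ⊗ₖ OR' a i) := by
      intro a
      split_ifs with h <;> simp
    rw [hTdef, ← Finset.univ_sigma_univ, Finset.sum_sigma]
    calc ∑ a ∈ 𝒜, ∑ i : Fin (Deg a), (s a : ℂ) • (OL a i ⊗ₖ OR' a i)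
        = ∑ a : Fin N,
            (if a ∈ 𝒜 then ∑ i : Fin (Deg a), (s a : ℂ) • (OL a i ⊗ₖ OR' a i) else 0) := by
          rw [Finset.sum_ite_mem, Finset.univ_inter]
      _ = _ := Finset.sum_congr rfl fun a _ => h1 a
  have hTH : Tᴴ = ∑ q : Σ a : Fin N, Fin (Deg a),
      ((if q.1 ∈ 𝒜 then (1 : ℂ) else 0) * (s q.1 : ℂ)) •
        ((OL q.1 q.2)ᴴ ⊗ₖ (OR' q.1 q.2)ᴴ) := by
    rw [hTdef, Matrix.conjTranspose_sum]
    refine Finset.sum_congr rfl fun q _ => ?_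
    rw [Matrix.conjTranspose_smul, kron_conjTranspose]
    congr 1
    split_ifs <;> simp [Complex.star_def, Complex.conj_ofReal]
  have hcoll1 : ∀ q : Σ a : Fin N, Fin (Deg a),
      ctrL (OL q.1 q.2) S = (s q.1 : ℂ) • OR' q.1 q.2 := by
    intro q
    rw [hctrLS]
    simp only [hLorth, mul_ite, mul_one, mul_zero, ite_smul, zero_smul]
    rw [Finset.sum_ite_eq Finset.univ q]
    simp
  have hA : T = ∑ q : Σ a : Fin N, Fin (Deg a),
      (if q.1 ∈ 𝒜 then (1 : ℂ) else 0) • (OL q.1 q.2 ⊗ₖ ctrL (OL q.1 q.2) S) := by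
    rw [hTdef]
    refine Finset.sum_congr rfl fun q _ => ?_
    rw [hcoll1 q, Matrix.kronecker_smul, smul_smul]
  have hB : ∑ q : Σ a : Fin N, Fin (Deg a),
      (if q.1 ∈ 𝒜 then (1 : ℂ) else 0) • (OL q.1 q.2 ⊗ₖ ctrL (OL q.1 q.2) Sᴴ) = Tᴴ := by
    calc ∑ q : Σ a : Fin N, Fin (Deg a),
          (if q.1 ∈ 𝒜 then (1 : ℂ) else 0) • (OL q.1 q.2 ⊗ₖ ctrL (OL q.1 q.2) Sᴴ)
        = ∑ q : Σ a : Fin N, Fin (Deg a), ∑ p : Σ a : Fin N, Fin (Deg a),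
            ((if q.1 ∈ 𝒜 then (1 : ℂ) else 0) *
              ((s p.1 : ℂ) * nFrobInner (OL q.1 q.2) (OL p.1 p.2)ᴴ)) •
              (OL q.1 q.2 ⊗ₖ (OR' p.1 p.2)ᴴ) := by
          refine Finset.sum_congr rfl fun q _ => ?_
          rw [hctrLSH (OL q.1 q.2), kron_sum_right, Finset.smul_sum]
          refine Finset.sum_congr rfl fun p _ => ?_
          rw [Matrix.kronecker_smul, smul_smul]
      _ = ∑ p : Σ a : Fin N, Fin (Deg a), ∑ q : Σ a : Fin N, Fin (Deg a),
            ((if q.1 ∈ 𝒜 then (1 : ℂ) else 0) *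
              ((s p.1 : ℂ) * nFrobInner (OL q.1 q.2) (OL p.1 p.2)ᴴ)) •
              (OL q.1 q.2 ⊗ₖ (OR' p.1 p.2)ᴴ) := Finset.sum_comm
      _ = ∑ p : Σ a : Fin N, Fin (Deg a), (s p.1 : ℂ) •
            ((∑ q : Σ a : Fin N, Fin (Deg a),
              ((if q.1 ∈ 𝒜 then (1 : ℂ) else 0) *
                nFrobInner (OL q.1 q.2) ((OL p.1 p.2)ᴴ)) • OL q.1 q.2) ⊗ₖ
              (OR' p.1 p.2)ᴴ) := by
          refine Finset.sum_congr rfl fun p _ => ?_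
          rw [kron_sum_left, Finset.smul_sum]
          refine Finset.sum_congr rfl fun q _ => ?_
          rw [Matrix.smul_kronecker, smul_smul]
          congr 1
          ring
      _ = ∑ p : Σ a : Fin N, Fin (Deg a), (s p.1 : ℂ) •
            (((if p.1 ∈ 𝒜 then (1 : ℂ) else 0) • (OL p.1 p.2)ᴴ) ⊗ₖ (OR' p.1 p.2)ᴴ) := by
          refine Finset.sum_congr rfl fun p _ => ?_
          rw [key ((OL p.1 p.2)ᴴ)]
          congr 2
          simp only [hLorth', mul_ite, mul_one, mul_zero, ite_mul, zero_mul, ite_smul, zero_smul]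
          rw [Finset.sum_ite_eq' Finset.univ p]
          simp
      _ = Tᴴ := by
          rw [hTH]
          refine Finset.sum_congr rfl fun p _ => ?_
          rw [Matrix.smul_kronecker, smul_smul]
          congr 1
          ring
  have hTherm : Tᴴ = T := by
    rw [← hB, hS, ← hA]
  refine Matrix.IsHermitian.add (Matrix.IsHermitian.add hHLHerm hHRHerm) ?_
  rw [hT']
  exact hTherm
end

section
/- Let H = Σ_{a} s_a · A_a ⊗ B_a be a Hermitian operator on H_L ⊗ H_R, with {A_a} and {B_a} orthonormal families under the normalized Frobenius inner product and s_1 ≥ s_2 ≥ … ≥ s_D ≥ 0. If the singular values grouped into degenerate multiplets with a multiplet {a : s_a = s} of size D_s, then for each distinct positive singular value s the partial sum Σ_{a: s_a = s} s · A_a ⊗ B_a equals its own Hermitian adjoint. -/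
open Matrix
open scoped Kronecker

section aux

open Polynomial

lemma vecMulVec_conjT {I J : Type*} (u : I → ℂ) (v : J → ℂ) :
    (vecMulVec u v)ᴴ = vecMulVec (star v) (star u) := by
  ext i j
  simp [vecMulVec_apply, conjTranspose_apply, mul_comm]

lemma vecMulVec_mul_vecMulVec {I J K : Type*} [Fintype J]
    (u : I → ℂ) (v w : J → ℂ) (x : K → ℂ) :
    vecMulVec u v * vecMulVec w x = (v ⬝ᵥ w) • vecMulVec u x := by
  ext i k
  simp only [mul_apply, vecMulVec_apply, Matrix.smul_apply, dotProduct, smul_eq_mul,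
    Finset.sum_mul]
  exact Finset.sum_congr rfl fun j _ => by ring

/-- Spectral computation: if `M = ∑ s_a • u_a v_aᵀ` with orthogonal families, then
`p(M Mᴴ) * M = ∑ s_a p(c d s_a²) • u_a v_aᵀ`. -/
lemma spectral_poly {I J : Type*} [Fintype I] [DecidableEq I] [Fintype J] (D : ℕ) (s : Fin D → ℝ)
    (u : Fin D → I → ℂ) (v : Fin D → J → ℂ) (c d : ℂ)
    (hu : ∀ a b, star (u a) ⬝ᵥ u b = if a = b then c else 0)
    (hv : ∀ a b, v a ⬝ᵥ star (v b) = if a = b then d else 0)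
    (M : Matrix I J ℂ) (hM : M = ∑ a, (s a : ℂ) • vecMulVec (u a) (v a))
    (p : ℂ[X]) :
    (aeval (M * Mᴴ) p) * M
      = ∑ a, ((s a : ℂ) * p.eval (c * d * (s a : ℂ) ^ 2)) • vecMulVec (u a) (v a) := by
  have hGvv : ∀ b (x : J → ℂ), (M * Mᴴ) * vecMulVec (u b) x
      = (c * d * (s b : ℂ) ^ 2) • vecMulVec (u b) x := by
    intro b x
    have hMH : Mᴴ = ∑ a, (s a : ℂ) • vecMulVec (star (v a)) (star (u a)) := by
      rw [hM, conjTranspose_sum]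
      refine Finset.sum_congr rfl fun a _ => ?_
      rw [conjTranspose_smul, vecMulVec_conjT]
      simp [Complex.star_def, Complex.conj_ofReal]
    rw [Matrix.mul_assoc, hMH, Matrix.sum_mul]
    have h1 : ∀ a : Fin D,
        ((s a : ℂ) • vecMulVec (star (v a)) (star (u a))) * vecMulVec (u b) x
        = if a = b then ((s a : ℂ) * c) • vecMulVec (star (v a)) x else 0 := by
      intro a
      rw [Matrix.smul_mul, _root_.vecMulVec_mul_vecMulVec, hu a b, smul_smul]
      split <;> simp
    simp_rw [h1]
    rw [Finset.sum_ite_eq' Finset.univ b]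
    simp only [Finset.mem_univ, if_true]
    rw [hM, Matrix.sum_mul]
    have h2 : ∀ a : Fin D,
        ((s a : ℂ) • vecMulVec (u a) (v a)) * (((s b : ℂ) * c) • vecMulVec (star (v b)) x)
        = if a = b then ((s a : ℂ) * ((s b : ℂ) * c) * d) • vecMulVec (u a) x else 0 := by
      intro a
      rw [Matrix.smul_mul, Matrix.mul_smul, _root_.vecMulVec_mul_vecMulVec, hv a b,
        smul_smul, smul_smul]
      split <;> simp
    simp_rw [h2]
    rw [Finset.sum_ite_eq' Finset.univ b]
    simp only [Finset.mem_univ, if_true]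
    congr 1
    ring
  have hpow : ∀ n : ℕ, (M * Mᴴ) ^ n * M
      = ∑ a, ((s a : ℂ) * (c * d * (s a : ℂ) ^ 2) ^ n) • vecMulVec (u a) (v a) := by
    intro n
    induction n with
    | zero => simpa using hM
    | succ n ih =>
      rw [pow_succ', Matrix.mul_assoc, ih, Matrix.mul_sum]
      refine Finset.sum_congr rfl fun a _ => ?_
      rw [Matrix.mul_smul, hGvv a (v a), smul_smul]
      rw [pow_succ]
      congr 1
      ring
  rw [Polynomial.aeval_eq_sum_range, Matrix.sum_mul]
  have h3 : ∀ i : ℕ, (p.coeff i • (M * Mᴴ) ^ i) * M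
      = ∑ a, (p.coeff i * ((s a : ℂ) * (c * d * (s a : ℂ) ^ 2) ^ i))
          • vecMulVec (u a) (v a) := by
    intro i
    rw [Matrix.smul_mul, hpow i, Finset.smul_sum]
    exact Finset.sum_congr rfl fun a _ => by rw [smul_smul]
  simp_rw [h3]
  rw [Finset.sum_comm]
  refine Finset.sum_congr rfl fun a _ => ?_
  rw [← Finset.sum_smul]
  congr 1
  rw [Polynomial.eval_eq_sum_range, Finset.mul_sum]
  exact Finset.sum_congr rfl fun i _ => by ring

/-- Key uniqueness lemma: if two orthogonal rank-one decompositions with the same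
nonnegative coefficients coincide, then they coincide blockwise on each positive value. -/
lemma key_block {I J : Type*} [Fintype I] [DecidableEq I] [Fintype J] (D : ℕ) (s : Fin D → ℝ)
    (hnn : ∀ a, 0 ≤ s a) (u u' : Fin D → I → ℂ) (v v' : Fin D → J → ℂ)
    (c d : ℝ) (hc : 0 < c) (hd : 0 < d)
    (hu : ∀ a b, star (u a) ⬝ᵥ u b = if a = b then (c : ℂ) else 0)
    (hu' : ∀ a b, star (u' a) ⬝ᵥ u' b = if a = b then (c : ℂ) else 0)
    (hv : ∀ a b, v a ⬝ᵥ star (v b) = if a = b then (d : ℂ) else 0)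
    (hv' : ∀ a b, v' a ⬝ᵥ star (v' b) = if a = b then (d : ℂ) else 0)
    (heq : ∑ a, (s a : ℂ) • vecMulVec (u a) (v a)
         = ∑ a, (s a : ℂ) • vecMulVec (u' a) (v' a))
    (t : ℝ) (ht : 0 < t) :
    ∑ a ∈ Finset.univ.filter (fun a => s a = t), (s a : ℂ) • vecMulVec (u a) (v a)
    = ∑ a ∈ Finset.univ.filter (fun a => s a = t), (s a : ℂ) • vecMulVec (u' a) (v' a) := by
  classical
  set M : Matrix I J ℂ := ∑ a, (s a : ℂ) • vecMulVec (u a) (v a) with hMdef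
  -- nodes
  set nodes : Finset ℂ := Finset.image (fun a => ((c : ℂ) * d * (s a : ℂ) ^ 2)) Finset.univ
    with hnodes
  set r : ℂ → ℂ := fun x => if x = (c : ℂ) * d * (t : ℂ) ^ 2 then 1 else 0 with hr
  set p : Polynomial ℂ := Lagrange.interpolate nodes id r with hp
  have hinj : Set.InjOn (id : ℂ → ℂ) ↑nodes := Function.injective_id.injOn
  have hpeval : ∀ a : Fin D,
      p.eval ((c : ℂ) * d * (s a : ℂ) ^ 2) = if s a = t then 1 else 0 := by
    intro a
    have hmem : ((c : ℂ) * d * (s a : ℂ) ^ 2) ∈ nodes :=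
      Finset.mem_image_of_mem _ (Finset.mem_univ a)
    have := Lagrange.eval_interpolate_at_node r hinj hmem
    rw [id] at this
    rw [hp, this, hr]
    by_cases hst : s a = t
    · simp [hst]
    · have hne : ((c : ℂ) * d * (s a : ℂ) ^ 2) ≠ (c : ℂ) * d * (t : ℂ) ^ 2 := by
        intro hcontra
        have hcd : ((c : ℂ) * d) ≠ 0 := by
          simp only [ne_eq, mul_eq_zero, Complex.ofReal_eq_zero]
          push_neg
          exact ⟨hc.ne', hd.ne'⟩
        have h2 : ((s a : ℂ)) ^ 2 = ((t : ℂ)) ^ 2 := mul_left_cancel₀ hcd hcontra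
        have h3 : (s a) ^ 2 = t ^ 2 := by exact_mod_cast h2
        have h4 : s a = t := by
          have h5 := congrArg Real.sqrt h3
          rwa [Real.sqrt_sq (hnn a), Real.sqrt_sq ht.le] at h5
        exact hst h4
      simp [hne, hst]
  have e1 := spectral_poly D s u v (c : ℂ) (d : ℂ) hu hv M hMdef p
  have e2 := spectral_poly D s u' v' (c : ℂ) (d : ℂ) hu' hv' M heq p
  rw [e1] at e2
  calc ∑ a ∈ Finset.univ.filter (fun a => s a = t), (s a : ℂ) • vecMulVec (u a) (v a)
      = ∑ a, ((s a : ℂ) * p.eval ((c : ℂ) * d * (s a : ℂ) ^ 2)) • vecMulVec (u a) (v a) := by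
        rw [Finset.sum_filter]
        refine Finset.sum_congr rfl fun a _ => ?_
        rw [hpeval a]
        split <;> simp
    _ = ∑ a, ((s a : ℂ) * p.eval ((c : ℂ) * d * (s a : ℂ) ^ 2)) • vecMulVec (u' a) (v' a) := e2
    _ = ∑ a ∈ Finset.univ.filter (fun a => s a = t), (s a : ℂ) • vecMulVec (u' a) (v' a) := by
        rw [Finset.sum_filter]
        refine Finset.sum_congr rfl fun a _ => ?_
        rw [hpeval a]
        split <;> simp

end aux

/-- For a Hermitian operator `H = Σ_a s_a A_a ⊗ B_a` with orthonormal families and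
decreasingly ordered nonnegative singular values, each block of fixed positive singular
value `s` is itself Hermitian. -/
theorem stmt1 {L R : Type*} [Fintype L] [DecidableEq L] [Fintype R] [DecidableEq R]
    (D : ℕ) (s : Fin D → ℝ)
    (A : Fin D → Matrix L L ℂ) (B : Fin D → Matrix R R ℂ)
    (hmono : Antitone s) (hnn : ∀ a, 0 ≤ s a)
    (horthA : ∀ a b, nFrobInner (A a) (A b) = if a = b then 1 else 0)
    (horthB : ∀ a b, nFrobInner (B a) (B b) = if a = b then 1 else 0)
    (hHerm : (∑ a : Fin D, (s a : ℂ) • (A a ⊗ₖ B a)).IsHermitian) :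
    ∀ t : ℝ, 0 < t →
      (∑ a ∈ Finset.univ.filter (fun a => s a = t),
        (s a : ℂ) • (A a ⊗ₖ B a)).IsHermitian := by
  intro t ht
  by_cases hD : D = 0
  · subst hD
    rw [Finset.univ_eq_empty, Finset.filter_empty, Finset.sum_empty]
    exact isHermitian_zero
  have hD0 : 0 < D := Nat.pos_of_ne_zero hD
  have hL : ((Fintype.card L : ℕ) : ℂ) ≠ 0 := by
    intro h0
    have h1 := horthA ⟨0, hD0⟩ ⟨0, hD0⟩
    simp [nFrobInner, h0] at h1
  have hR : ((Fintype.card R : ℕ) : ℂ) ≠ 0 := by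
    intro h0
    have h1 := horthB ⟨0, hD0⟩ ⟨0, hD0⟩
    simp [nFrobInner, h0] at h1
  have hcL : (0 : ℝ) < (Fintype.card L : ℝ) := by
    have : Fintype.card L ≠ 0 := by exact_mod_cast hL
    exact_mod_cast Nat.pos_of_ne_zero this
  have hcR : (0 : ℝ) < (Fintype.card R : ℝ) := by
    have : Fintype.card R ≠ 0 := by exact_mod_cast hR
    exact_mod_cast Nat.pos_of_ne_zero this
  -- vectorized families
  set u : Fin D → (L × L) → ℂ := fun a p => A a p.1 p.2 with hudef
  set v : Fin D → (R × R) → ℂ := fun a q => B a q.1 q.2 with hvdef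
  set u' : Fin D → (L × L) → ℂ := fun a p => star (A a p.2 p.1) with hu'def
  set v' : Fin D → (R × R) → ℂ := fun a q => star (B a q.2 q.1) with hv'def
  have htrA : ∀ a b, ((A a)ᴴ * A b).trace
      = (if a = b then 1 else 0) * ((Fintype.card L : ℕ) : ℂ) := by
    intro a b
    have h1 := horthA a b
    rw [nFrobInner, div_eq_iff hL] at h1
    exact h1
  have htrB : ∀ a b, ((B a)ᴴ * B b).trace
      = (if a = b then 1 else 0) * ((Fintype.card R : ℕ) : ℂ) := by
    intro a b
    have h1 := horthB a b
    rw [nFrobInner, div_eq_iff hR] at h1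
    exact h1
  have hdotA : ∀ a b, (∑ p : L × L, star (A a p.1 p.2) * A b p.1 p.2)
      = ((A a)ᴴ * A b).trace := by
    intro a b
    rw [Matrix.trace]
    simp only [diag_apply, mul_apply, conjTranspose_apply]
    rw [Fintype.sum_prod_type]
    exact Finset.sum_comm
  have hdotB : ∀ a b, (∑ q : R × R, star (B a q.1 q.2) * B b q.1 q.2)
      = ((B a)ᴴ * B b).trace := by
    intro a b
    rw [Matrix.trace]
    simp only [diag_apply, mul_apply, conjTranspose_apply]
    rw [Fintype.sum_prod_type]
    exact Finset.sum_comm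
  have hu : ∀ a b, star (u a) ⬝ᵥ u b
      = if a = b then (((Fintype.card L : ℝ) : ℂ)) else 0 := by
    intro a b
    simp only [dotProduct, Pi.star_apply, hudef]
    rw [hdotA a b, htrA a b]
    push_cast
    split <;> simp
  have hv : ∀ a b, v a ⬝ᵥ star (v b)
      = if a = b then (((Fintype.card R : ℝ) : ℂ)) else 0 := by
    intro a b
    simp only [dotProduct, Pi.star_apply, hvdef]
    have : (∑ q : R × R, B a q.1 q.2 * star (B b q.1 q.2))
        = star (∑ q : R × R, star (B a q.1 q.2) * B b q.1 q.2) := by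
      rw [star_sum]
      exact Finset.sum_congr rfl fun q _ => by rw [star_mul', star_star, mul_comm]
    rw [this, hdotB a b, htrB a b]
    push_cast
    split <;> simp
  have hu' : ∀ a b, star (u' a) ⬝ᵥ u' b
      = if a = b then (((Fintype.card L : ℝ) : ℂ)) else 0 := by
    intro a b
    simp only [dotProduct, Pi.star_apply, hu'def, star_star]
    have : (∑ p : L × L, A a p.2 p.1 * star (A b p.2 p.1))
        = star (∑ p : L × L, star (A a p.1 p.2) * A b p.1 p.2) := by
      rw [star_sum]
      rw [← Equiv.sum_comp (Equiv.prodComm L L) (fun p => A a p.2 p.1 * star (A b p.2 p.1))]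
      exact Finset.sum_congr rfl fun p _ => by
        simp [Equiv.prodComm, star_mul', star_star, mul_comm]
    rw [this, hdotA a b, htrA a b]
    push_cast
    split <;> simp
  have hv' : ∀ a b, v' a ⬝ᵥ star (v' b)
      = if a = b then (((Fintype.card R : ℝ) : ℂ)) else 0 := by
    intro a b
    simp only [dotProduct, Pi.star_apply, hv'def, star_star]
    have : (∑ q : R × R, star (B a q.2 q.1) * B b q.2 q.1)
        = ∑ q : R × R, star (B a q.1 q.2) * B b q.1 q.2 := by
      rw [← Equiv.sum_comp (Equiv.prodComm R R) (fun q => star (B a q.2 q.1) * B b q.2 q.1)]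
      exact Finset.sum_congr rfl fun q _ => by simp [Equiv.prodComm]
    rw [this, hdotB a b, htrB a b]
    push_cast
    split <;> simp
  have heq : (∑ a, (s a : ℂ) • vecMulVec (u a) (v a))
      = ∑ a, (s a : ℂ) • vecMulVec (u' a) (v' a) := by
    ext ⟨i, j⟩ ⟨k, l⟩
    have h := congrFun (congrFun hHerm ((i, k) : L × R)) ((j, l) : L × R)
    simp only [conjTranspose_apply, Matrix.sum_apply, Matrix.smul_apply, kroneckerMap_apply,
      smul_eq_mul, star_sum, star_mul', Complex.star_def, Complex.conj_ofReal,
      _root_.map_mul, map_sum] at h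
    simp only [Matrix.sum_apply, Matrix.smul_apply, vecMulVec_apply, smul_eq_mul, hudef, hvdef,
      hu'def, hv'def, Complex.star_def]
    rw [← h]
  have hkey := key_block D s hnn u u' v v' (Fintype.card L : ℝ) (Fintype.card R : ℝ)
    hcL hcR hu hu' hv hv' heq t ht
  show _ᴴ = _
  ext ⟨i, k⟩ ⟨j, l⟩
  have h2 := congrFun (congrFun hkey ((i, j) : L × L)) ((k, l) : R × R)
  simp only [Matrix.sum_apply, Matrix.smul_apply, vecMulVec_apply, smul_eq_mul, hudef, hvdef,
    hu'def, hv'def, Complex.star_def] at h2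
  simp only [conjTranspose_apply, Matrix.sum_apply, Matrix.smul_apply, kroneckerMap_apply,
    smul_eq_mul, star_sum, star_mul', Complex.star_def, Complex.conj_ofReal,
    _root_.map_mul, map_sum]
  rw [← h2]
end

section
/- Let {W^(n)}_{n=1}^N be a collection of matrices where W^(n) has size D^(n) × D^(n+1) (indices mod N), interpreted as a unit-cell MPO whose finite state machine is loop free (admits a topological ordering of the union of bond-index sets satisfying W^(n)_{ab} = 0 whenever (a,n) ⪰ (b,n+1)). Then there exist injections P_n : {1,…,D^(n+1)} → {1,…,D} with D = Σ_n D^(n), realized as D^(n) × D matrices with P_n† P_n = I, such that the enlarged matrices W'^(n) := P_{n−1}† W^(n) P_n are all D × D upper triangular and satisfy the gauge relation P_{n−1} W'^(n) = W^(n) P_n. -/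
open Matrix

/-- A loop-free unit-cell MPO (one admitting a topological ordering of its bond indices)
can be embedded, via 0-1 injection matrices `P n` with `P n * (P n)ᴴ = 1`, into enlarged
`D × D` matrices `(P n)ᴴ * W n * P (n+1)` that are strictly upper triangular and satisfy
the gauge relation `P n * W' n = W n * P (n+1)`. -/
theorem stmt6 {N : ℕ} [NeZero N] (D : Fin N → ℕ)
    (W : (n : Fin N) → Matrix (Fin (D n)) (Fin (D (n + 1))) ℂ)
    (O : (Σ n : Fin N, Fin (D n)) ≃ Fin (∑ n, D n))
    (hord : ∀ (n : Fin N) (a : Fin (D n)) (b : Fin (D (n + 1))),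
      O ⟨n + 1, b⟩ ≤ O ⟨n, a⟩ → W n a b = 0) :
    ∃ ι : (n : Fin N) → Fin (D n) ↪ Fin (∑ n, D n),
    ∃ P : (n : Fin N) → Matrix (Fin (D n)) (Fin (∑ n, D n)) ℂ,
      (∀ n b i, P n b i = if ι n b = i then 1 else 0) ∧
      (∀ n, P n * (P n)ᴴ = 1) ∧
      (∀ (n : Fin N) (i j : Fin (∑ n, D n)), j ≤ i →
        ((P n)ᴴ * W n * P (n + 1)) i j = 0) ∧
      (∀ n : Fin N, P n * ((P n)ᴴ * W n * P (n + 1)) = W n * P (n + 1)) := by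
  have hinj : ∀ n : Fin N, Function.Injective (fun b : Fin (D n) => O ⟨n, b⟩) := by
    intro n b b' h
    have := O.injective h
    exact (Sigma.mk.inj_iff.mp this).2.eq
  set P : (n : Fin N) → Matrix (Fin (D n)) (Fin (∑ n, D n)) ℂ :=
    fun n => Matrix.of fun b i => if O ⟨n, b⟩ = i then 1 else 0 with hP
  have hPP : ∀ n, P n * (P n)ᴴ = 1 := by
    intro n
    ext b b'
    simp only [hP, Matrix.mul_apply, Matrix.conjTranspose_apply, Matrix.of_apply,
      Matrix.one_apply, apply_ite (star : ℂ → ℂ), star_one, star_zero, mul_ite, mul_one, mul_zero,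
      ite_mul, one_mul, zero_mul]
    rw [Finset.sum_ite_eq Finset.univ (O ⟨n, b'⟩)
      (fun i => if O ⟨n, b⟩ = i then (1:ℂ) else 0)]
    simp only [Finset.mem_univ, if_true]
    by_cases h : b = b'
    · subst h; simp
    · have : O ⟨n, b⟩ ≠ O ⟨n, b'⟩ := fun hh => h (hinj n hh)
      simp [this, h]
  refine ⟨fun n => ⟨fun b => O ⟨n, b⟩, hinj n⟩, P, fun n b i => rfl, hPP, ?_, ?_⟩
  · intro n i j hij
    simp only [Matrix.mul_apply, Matrix.conjTranspose_apply]
    refine Finset.sum_eq_zero fun b _ => ?_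
    by_cases hb : O ⟨n + 1, b⟩ = j
    · refine mul_eq_zero.mpr (Or.inl ?_)
      refine Finset.sum_eq_zero fun a _ => ?_
      by_cases ha : O ⟨n, a⟩ = i
      · have hw : W n a b = 0 := hord n a b (by rw [hb, ha]; exact hij)
        simp [hw]
      · simp [hP, ha]
    · refine mul_eq_zero.mpr (Or.inr ?_)
      simp [hP, hb]
  · intro n
    calc P n * ((P n)ᴴ * W n * P (n + 1))
        = (P n * (P n)ᴴ) * W n * P (n + 1) := by
          rw [Matrix.mul_assoc, Matrix.mul_assoc, Matrix.mul_assoc]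
      _ = W n * P (n + 1) := by rw [hPP n, Matrix.one_mul]
end
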